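/- (Transference principle) Let Γ be a group of polynomial growth with word metric and counting measure, and let (S_{B(g,r)}) be a stationary real-valued process on a probability space (X,𝒫) indexed by closed balls of Γ. Fix k, l ∈ ℕ, an interval (α,β), and measurable events Q_{g,l}^k := {x : (S_{B(g,i)}(x))_{i=1}^l has at least k upcrossings across (α,β)} and events R_g^k (defined covariantly so that ℙ(Q_{g,l}^k \ R_g^k) = ℙ(Q_{e,l}^k \ R_e^k) for all g). For x ∈ X and M ∈ ℕ, set E_{M,l,x}^k := {g ∈ B(M) : x ∈ Q_{g,l}^k \ R_g^k}. Suppose t ≥ 0 and M₀ ∈ ℕ are such that for all M ≥ M₀ and ℙ-almost all x, |E_{M,l,x}^k| ≤ t|B(M)| + o_{x,l}(|B(M)|), where the error term divided by |B(M)| tends to 0 uniformly in x. Then ℙ(Q_{e,l}^k \ R_e^k) ≤ t. -/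

import Mathlib

open Filter MeasureTheory
open scoped ENNReal

/-- The word norm of `g` with respect to a generating set `S` of a group. -/
noncomputable def wordNorm {Γ : Type*} [Group Γ] (S : Set Γ) (g : Γ) : ℕ :=
  sInf {n : ℕ | ∃ f : Fin n → Γ, (∀ i, f i ∈ S ∨ (f i)⁻¹ ∈ S) ∧ g = (List.ofFn f).prod}

/-- The closed ball of radius `r` around `g` for the right-invariant word metric
`d(x,y) = ‖x y⁻¹‖`. -/
def wordBall {Γ : Type*} [Group Γ] (S : Set Γ) (g : Γ) (r : ℕ) : Set Γ :=
  {y : Γ | wordNorm S (g * y⁻¹) ≤ r}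

section Aux
variable {Γ : Type*} [Group Γ] {S : Set Γ}

lemma repSet_nonempty (hSgen : Subgroup.closure S = ⊤) (g : Γ) :
    {n : ℕ | ∃ f : Fin n → Γ, (∀ i, f i ∈ S ∨ (f i)⁻¹ ∈ S) ∧
      g = (List.ofFn f).prod}.Nonempty := by
  have hg : g ∈ Submonoid.closure (S ∪ S⁻¹) := by
    rw [← Subgroup.closure_toSubmonoid, hSgen]
    trivial
  obtain ⟨L, hL, hprod⟩ := Submonoid.exists_list_of_mem_closure hg
  refine ⟨L.length, L.get, fun i => ?_, ?_⟩
  · rcases hL _ (L.get_mem i) with h | h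
    · exact Or.inl h
    · exact Or.inr (Set.mem_inv.mp h)
  · rw [List.ofFn_get]; exact hprod.symm

lemma one_mem_wordBall (M : ℕ) : (1 : Γ) ∈ wordBall S 1 M := by
  have h0 : (0 : ℕ) ∈ {n : ℕ | ∃ f : Fin n → Γ, (∀ i, f i ∈ S ∨ (f i)⁻¹ ∈ S) ∧
      (1 : Γ) * (1 : Γ)⁻¹ = (List.ofFn f).prod} := by
    exact ⟨Fin.elim0, fun i => i.elim0, by simp⟩
  have : wordNorm S ((1 : Γ) * (1 : Γ)⁻¹) = 0 := by
    unfold wordNorm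
    exact
    Nat.le_zero.mp (Nat.sInf_le h0)
  simp only [wordBall, Set.mem_setOf_eq, wordNorm] at this ⊢
  rw [this]
  exact Nat.zero_le M

lemma wordBall_finite (hSfin : S.Finite) (hSgen : Subgroup.closure S = ⊤) (M : ℕ) :
    (wordBall S 1 M).Finite := by
  classical
  have hT : (S ∪ S⁻¹).Finite := hSfin.union hSfin.inv
  haveI : Finite ↥(S ∪ S⁻¹) := hT.to_subtype
  have hN : {g : Γ | wordNorm S g ≤ M}.Finite := by
    refine ((List.finite_length_le ↥(S ∪ S⁻¹) M).image
      (fun L => (L.map Subtype.val).prod)).subset ?_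
    intro g hg
    obtain ⟨f, hf, hfp⟩ := Nat.sInf_mem (repSet_nonempty hSgen g)
    have hmem : ∀ i, f i ∈ S ∪ S⁻¹ := by
      intro i
      rcases hf i with h | h
      · exact Or.inl h
      · exact Or.inr (Set.mem_inv.mpr h)
    refine ⟨List.ofFn (fun i => (⟨f i, hmem i⟩ : ↥(S ∪ S⁻¹))), ?_, ?_⟩
    · simpa [wordNorm] using hg
    · simp only [List.map_ofFn]
      have : (Subtype.val ∘ fun i => (⟨f i, hmem i⟩ : ↥(S ∪ S⁻¹))) = f := rfl
      rw [this]
      exact hfp.symm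
  have heq : wordBall S 1 M = (fun y : Γ => y⁻¹) ⁻¹' {g : Γ | wordNorm S g ≤ M} := by
    ext y; simp [wordBall, wordNorm]
  rw [heq]
  exact hN.preimage (inv_injective.injOn)

end Aux

/-- Transference principle: a uniform density bound on the sets
`E_{M,l,x}^k = {g ∈ B(M) : x ∈ Q_g^k \ R_g^k}` bounds `ℙ(Q_e^k \ R_e^k)`. -/
theorem stmt16 {Γ : Type*} [Group Γ] (S : Set Γ) (hSfin : S.Finite)
    (hSgen : Subgroup.closure S = ⊤)
    -- Γ has polynomial growth:
    (hpoly : ∃ (Cg : ℝ) (dg : ℕ), 0 < Cg ∧ ∀ n : ℕ, 1 ≤ n →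
      (Nat.card (wordBall S 1 n) : ℝ) ≤ Cg * (n : ℝ) ^ dg)
    {X : Type*} [MeasurableSpace X] (P : Measure X) [IsProbabilityMeasure P]
    -- a stationary process indexed by the balls B(g,r):
    (F : Γ → ℕ → X → ℝ) (hFmeas : ∀ g r, Measurable (F g r))
    (hstat : ∀ h : Γ,
      Measure.map (fun x => fun p : Γ × ℕ => F (p.1 * h) p.2 x) P =
      Measure.map (fun x => fun p : Γ × ℕ => F p.1 p.2 x) P)
    (α β : ℝ) (hαβ : α < β) (k l : ℕ)
    -- the events Q_{g,l}^k (at least k upcrossings of (S_{B(g,i)})_{i=1}^l):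
    (Q : Γ → Set X)
    (hQ : ∀ g, Q g = {x | ∃ i j : ℕ → ℕ,
      (∀ m < k, 1 ≤ i m ∧ i m < j m ∧ j m ≤ l ∧ F g (i m) x < α ∧ β < F g (j m) x) ∧
      (∀ m, m + 1 < k → j m < i (m + 1))})
    -- the events R_g^k, defined covariantly:
    (R : Γ → Set X) (hRmeas : ∀ g, MeasurableSet (R g))
    (hcov : ∀ g : Γ, P (Q g \ R g) = P (Q 1 \ R 1))
    (t : ℝ) (ht : 0 ≤ t) (M₀ : ℕ) (err : ℕ → ℝ)
    (herr : Tendsto (fun M : ℕ => err M / (Nat.card (wordBall S 1 M) : ℝ))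
      atTop (nhds 0))
    (hbound : ∀ M : ℕ, M₀ ≤ M → ∀ᵐ x ∂P,
      (Nat.card {g : Γ | g ∈ wordBall S 1 M ∧ x ∈ Q g \ R g} : ℝ)
        ≤ t * (Nat.card (wordBall S 1 M) : ℝ) + err M) :
    P (Q 1 \ R 1) ≤ ENNReal.ofReal t := by
  classical
  -- measurability of Q g
  have hQmeas : ∀ g, MeasurableSet (Q g) := by
    intro g
    rw [hQ g]
    have base : ∀ i j : ℕ → ℕ, MeasurableSet {x : X |
        (∀ m < k, 1 ≤ i m ∧ i m < j m ∧ j m ≤ l ∧ F g (i m) x < α ∧ β < F g (j m) x) ∧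
        (∀ m, m + 1 < k → j m < i (m + 1))} := by
      intro i j
      have hsplit : {x : X |
          (∀ m < k, 1 ≤ i m ∧ i m < j m ∧ j m ≤ l ∧ F g (i m) x < α ∧ β < F g (j m) x) ∧
          (∀ m, m + 1 < k → j m < i (m + 1))} =
        ({x : X | (∀ m < k, 1 ≤ i m ∧ i m < j m ∧ j m ≤ l) ∧
            (∀ m, m + 1 < k → j m < i (m + 1))} ∩
          ⋂ m, ⋂ (_ : m < k), ({x : X | F g (i m) x < α} ∩ {x : X | β < F g (j m) x})) := by
        ext x
        simp only [Set.mem_setOf_eq, Set.mem_inter_iff, Set.mem_iInter]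
        constructor
        · rintro ⟨h1, h2⟩
          exact ⟨⟨fun m hm => ⟨(h1 m hm).1, (h1 m hm).2.1, (h1 m hm).2.2.1⟩, h2⟩,
            fun m hm => ⟨(h1 m hm).2.2.2.1, (h1 m hm).2.2.2.2⟩⟩
        · rintro ⟨⟨h1, h2⟩, h3⟩
          exact ⟨fun m hm => ⟨(h1 m hm).1, (h1 m hm).2.1, (h1 m hm).2.2,
            (h3 m hm).1, (h3 m hm).2⟩, h2⟩
      rw [hsplit]
      refine MeasurableSet.inter (MeasurableSet.const _) ?_
      exact MeasurableSet.iInter fun m => MeasurableSet.iInter fun _ =>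
        ((measurableSet_lt (hFmeas g (i m)) measurable_const).inter
          (measurableSet_lt measurable_const (hFmeas g (j m))))
    let iv : (Fin k → ℕ × ℕ) → ℕ → ℕ := fun v m => if h : m < k then (v ⟨m, h⟩).1 else 0
    let jv : (Fin k → ℕ × ℕ) → ℕ → ℕ := fun v m => if h : m < k then (v ⟨m, h⟩).2 else 0
    have key : {x : X | ∃ i j : ℕ → ℕ,
        (∀ m < k, 1 ≤ i m ∧ i m < j m ∧ j m ≤ l ∧ F g (i m) x < α ∧ β < F g (j m) x) ∧
        (∀ m, m + 1 < k → j m < i (m + 1))} =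
      ⋃ v : Fin k → ℕ × ℕ, {x : X |
        (∀ m < k, 1 ≤ iv v m ∧ iv v m < jv v m ∧ jv v m ≤ l ∧
          F g (iv v m) x < α ∧ β < F g (jv v m) x) ∧
        (∀ m, m + 1 < k → jv v m < iv v (m + 1))} := by
      ext x
      simp only [Set.mem_setOf_eq, Set.mem_iUnion]
      constructor
      · rintro ⟨i, j, h1, h2⟩
        refine ⟨fun m => (i m, j m), ?_, ?_⟩
        · intro m hm
          have hi : iv (fun m => (i m, j m)) m = i m := by simp [iv, hm]
          have hj : jv (fun m => (i m, j m)) m = j m := by simp [jv, hm]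
          rw [hi, hj]; exact h1 m hm
        · intro m hm
          have hmk : m < k := lt_trans (Nat.lt_succ_self m) hm
          have hj : jv (fun m => (i m, j m)) m = j m := by simp [jv, hmk]
          have hi : iv (fun m => (i m, j m)) (m + 1) = i (m + 1) := by simp [iv, hm]
          rw [hi, hj]; exact h2 m hm
      · rintro ⟨v, h1, h2⟩
        exact ⟨iv v, jv v, h1, h2⟩
    rw [key]
    exact MeasurableSet.iUnion fun v => base (iv v) (jv v)
  have hQR : ∀ g : Γ, MeasurableSet (Q g \ R g) := fun g => (hQmeas g).diff (hRmeas g)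
  have hBfin : ∀ M : ℕ, (wordBall S 1 M).Finite := wordBall_finite hSfin hSgen
  set p : ℝ := (P (Q 1 \ R 1)).toReal with hpdef
  have hPne : P (Q 1 \ R 1) ≠ ⊤ := measure_ne_top P _
  have hPeq : P (Q 1 \ R 1) = ENNReal.ofReal p := (ENNReal.ofReal_toReal hPne).symm
  have hp0 : 0 ≤ p := ENNReal.toReal_nonneg
  suffices hpt : p ≤ t by rw [hPeq]; exact ENNReal.ofReal_le_ofReal hpt
  rcases eq_or_lt_of_le hp0 with hp0' | hp0'
  · exact le_trans hp0'.symm.le ht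
  have hkey : ∀ M, M₀ ≤ M → p ≤ t + err M / (Nat.card (wordBall S 1 M) : ℝ) := by
    intro M hM
    set B : Finset Γ := (hBfin M).toFinset with hB
    have hcard : B.card = Nat.card (wordBall S 1 M) := by
      rw [Nat.card_coe_set_eq, Set.ncard_eq_toFinset_card _ (hBfin M)]
    have hcpos : 0 < B.card :=
      Finset.card_pos.2 ⟨1, (hBfin M).mem_toFinset.2 (one_mem_wordBall M)⟩
    have hint : ∫⁻ x, (∑ g ∈ B, (Q g \ R g).indicator (1 : X → ℝ≥0∞) x) ∂P
        = (B.card : ℝ≥0∞) * P (Q 1 \ R 1) := by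
      rw [lintegral_finset_sum _ (fun g _ => (measurable_one.indicator (hQR g)))]
      have hterm : ∀ g ∈ B, ∫⁻ x, (Q g \ R g).indicator (1 : X → ℝ≥0∞) x ∂P
          = P (Q 1 \ R 1) := fun g _ => by
        rw [lintegral_indicator_one (hQR g), hcov g]
      rw [Finset.sum_congr rfl hterm, Finset.sum_const, nsmul_eq_mul]
    have hcount : ∀ x : X, (∑ g ∈ B, (Q g \ R g).indicator (1 : X → ℝ≥0∞) x)
        = ((Nat.card {g : Γ | g ∈ wordBall S 1 M ∧ x ∈ Q g \ R g} : ℕ) : ℝ≥0∞) := by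
      intro x
      have hset : {g : Γ | g ∈ wordBall S 1 M ∧ x ∈ Q g \ R g}
          = ↑(B.filter (fun g => x ∈ Q g \ R g)) := by
        ext g
        simp [hB, Set.Finite.mem_toFinset]
      have hn : Nat.card {g : Γ | g ∈ wordBall S 1 M ∧ x ∈ Q g \ R g}
          = (B.filter (fun g => x ∈ Q g \ R g)).card := by
        rw [hset, Nat.card_coe_set_eq, Set.ncard_coe_finset]
      rw [hn, Finset.card_filter]
      push_cast
      refine Finset.sum_congr rfl fun g _ => ?_
      by_cases hx : x ∈ Q g \ R g <;> simp [hx, Set.indicator]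
    have hae := hbound M hM
    have hle : (B.card : ℝ≥0∞) * P (Q 1 \ R 1)
        ≤ ENNReal.ofReal (t * (Nat.card (wordBall S 1 M) : ℝ) + err M) := by
      rw [← hint]
      calc ∫⁻ x, (∑ g ∈ B, (Q g \ R g).indicator (1 : X → ℝ≥0∞) x) ∂P
          ≤ ∫⁻ _, ENNReal.ofReal (t * (Nat.card (wordBall S 1 M) : ℝ) + err M) ∂P := by
            refine lintegral_mono_ae (hae.mono fun x hx => ?_)
            rw [hcount x, ← ENNReal.ofReal_natCast]
            exact ENNReal.ofReal_le_ofReal hx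
        _ = ENNReal.ofReal (t * (Nat.card (wordBall S 1 M) : ℝ) + err M) := by
            simp
    rw [hPeq, ← ENNReal.ofReal_natCast, ← ENNReal.ofReal_mul (Nat.cast_nonneg _)] at hle
    have hreal : (B.card : ℝ) * p ≤ t * (Nat.card (wordBall S 1 M) : ℝ) + err M := by
      rcases ENNReal.ofReal_le_ofReal_iff'.1 hle with h | h
      · exact h
      · exfalso
        have : (0 : ℝ) < (B.card : ℝ) * p := mul_pos (Nat.cast_pos.mpr hcpos) hp0'
        linarith
    have hc : (0 : ℝ) < (Nat.card (wordBall S 1 M) : ℝ) := by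
      rw [← hcard]; exact_mod_cast hcpos
    rw [hcard] at hreal
    have h2 : p ≤ (t * (Nat.card (wordBall S 1 M) : ℝ) + err M) /
        (Nat.card (wordBall S 1 M) : ℝ) := by
      rw [le_div_iff₀ hc]
      linarith
    calc p ≤ _ := h2
      _ = t + err M / (Nat.card (wordBall S 1 M) : ℝ) := by
          field_simp
  have hlim : Tendsto (fun M : ℕ => t + err M / (Nat.card (wordBall S 1 M) : ℝ))
      atTop (nhds (t + 0)) := tendsto_const_nhds.add herr
  rw [add_zero] at hlim
  exact ge_of_tendsto hlim (eventually_atTop.2 ⟨M₀, hkey⟩)
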